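/- Let G be a d-regular graph with d ≥ 3, let U be a non-empty vertex subset, and let 0 ≤ θ ≤ 1/3. Define edge weights w(u,v) = (1-θ)^{max{dist(u,U), dist(v,U)}} and let π_Q be the stationary distribution of the induced walk. Then for every u ∈ U, π_Q(u) ≥ (1/(2d|U|)) · (|U|/n)^{1 + log(1-θ)/log d}. -/

import Mathlib

open Finset

/-- The graph distance from a vertex `v` to a set of vertices `U`. -/
noncomputable def setDist {V : Type*} (G : SimpleGraph V) (U : Finset V) (v : V) : ℕ :=
  sInf ((fun u => G.dist v u) '' (U : Set V))

section Aux
variable {V : Type*} (G : SimpleGraph V) (U : Finset V)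

lemma setDist_le {v u : V} (hu : u ∈ U) : setDist G U v ≤ G.dist v u :=
  Nat.sInf_le ⟨u, by simpa using hu, rfl⟩

lemma setDist_exists {v : V} (hU : U.Nonempty) :
    ∃ u ∈ U, G.dist v u = setDist G U v := by
  obtain ⟨u, hu⟩ := hU
  have hne : ((fun u => G.dist v u) '' (U : Set V)).Nonempty := ⟨_, ⟨u, by simpa using hu, rfl⟩⟩
  obtain ⟨u', hu', h⟩ := Nat.sInf_mem hne
  exact ⟨u', by simpa using hu', h⟩

lemma setDist_self {u : V} (hu : u ∈ U) : setDist G U u = 0 := by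
  have := setDist_le G U hu (v := u)
  simp only [SimpleGraph.dist_self] at this
  omega

lemma mem_of_setDist_eq_zero (hconn : G.Connected) (hU : U.Nonempty) {v : V}
    (h : setDist G U v = 0) : v ∈ U := by
  obtain ⟨u, hu, hd⟩ := setDist_exists G U hU (v := v)
  rw [h] at hd
  rwa [(hconn.dist_eq_zero_iff).mp hd]

lemma setDist_le_succ (hconn : G.Connected) (hU : U.Nonempty) {x y : V} (h : G.Adj x y) :
    setDist G U x ≤ setDist G U y + 1 := by
  obtain ⟨u, hu, hd⟩ := setDist_exists G U hU (v := y)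
  calc setDist G U x ≤ G.dist x u := setDist_le G U hu
    _ ≤ G.dist x y + G.dist y u := hconn.dist_triangle
    _ ≤ setDist G U y + 1 := by
        have h1 : G.dist x y ≤ 1 := SimpleGraph.dist_le h.toWalk
        omega

lemma exists_adj_setDist_pred (hconn : G.Connected) (hU : U.Nonempty) {x : V} {m : ℕ}
    (h : setDist G U x = m + 1) : ∃ y, G.Adj x y ∧ setDist G U y = m := by
  obtain ⟨u, hu, hd⟩ := setDist_exists G U hU (v := x)
  rw [h] at hd
  obtain ⟨p, hp⟩ := (hconn x u).exists_walk_length_eq_dist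
  rw [hd] at hp
  cases p with
  | nil => simp at hp
  | @cons _ y _ hadj q =>
    refine ⟨y, hadj, ?_⟩
    have h1 : setDist G U y ≤ m := by
      calc setDist G U y ≤ G.dist y u := setDist_le G U hu
        _ ≤ q.length := SimpleGraph.dist_le q
        _ = m := by simpa using hp
    have h2 : m ≤ setDist G U y := by
      have := setDist_le_succ G U hconn hU hadj
      omega
    omega

end Aux

section Count
variable {V : Type*} [Fintype V] [DecidableEq V] (G : SimpleGraph V) [DecidableRel G.Adj]
  (U : Finset V)

lemma card_layer_zero_le (hconn : G.Connected) (hU : U.Nonempty) :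
    ({x ∈ (univ : Finset V) | setDist G U x = 0}).card ≤ U.card := by
  apply Finset.card_le_card
  intro x hx
  rw [Finset.mem_filter] at hx
  exact mem_of_setDist_eq_zero G U hconn hU hx.2

lemma card_layer_one_le (hconn : G.Connected) (hU : U.Nonempty) {d : ℕ}
    (hreg : G.IsRegularOfDegree d) :
    ({x ∈ (univ : Finset V) | setDist G U x = 1}).card ≤
      d * ({x ∈ (univ : Finset V) | setDist G U x = 0}).card := by
  classical
  have hex : ∀ x ∈ ({x ∈ (univ : Finset V) | setDist G U x = 1}), ∃ y, G.Adj x y ∧ setDist G U y = 0 := by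
    intro x hx
    rw [Finset.mem_filter] at hx
    exact exists_adj_setDist_pred G U hconn hU hx.2
  choose! f hf1 hf2 using hex
  apply Finset.card_le_mul_card_image_of_maps_to (f := f)
  · intro a ha
    simp only [Finset.mem_filter, Finset.mem_univ, true_and]
    exact hf2 a ha
  · intro b hb
    refine le_trans (Finset.card_le_card (t := G.neighborFinset b) ?_) ?_
    · intro a ha
      rw [Finset.mem_filter] at ha
      have := hf1 a ha.1
      rw [ha.2] at this
      rw [SimpleGraph.mem_neighborFinset]
      exact this.symm
    · rw [SimpleGraph.card_neighborFinset_eq_degree, hreg b]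

lemma card_layer_succ_le (hconn : G.Connected) (hU : U.Nonempty) {d : ℕ}
    (hreg : G.IsRegularOfDegree d) (m : ℕ) :
    ({x ∈ (univ : Finset V) | setDist G U x = m + 2}).card ≤
      (d - 1) * ({x ∈ (univ : Finset V) | setDist G U x = m + 1}).card := by
  classical
  have hex : ∀ x ∈ ({x ∈ (univ : Finset V) | setDist G U x = m + 2}),
      ∃ y, G.Adj x y ∧ setDist G U y = m + 1 := by
    intro x hx
    rw [Finset.mem_filter] at hx
    exact exists_adj_setDist_pred G U hconn hU hx.2
  choose! f hf1 hf2 using hex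
  apply Finset.card_le_mul_card_image_of_maps_to (f := f)
  · intro a ha
    simp only [Finset.mem_filter, Finset.mem_univ, true_and]
    exact hf2 a ha
  · intro b hb
    rw [Finset.mem_filter] at hb
    obtain ⟨z, hz1, hz2⟩ := exists_adj_setDist_pred G U hconn hU hb.2
    refine le_trans (Finset.card_le_card (t := (G.neighborFinset b).erase z) ?_) ?_
    · intro a ha
      rw [Finset.mem_filter] at ha
      have hadj := hf1 a ha.1
      rw [ha.2] at hadj
      have haL : setDist G U a = m + 2 := by
        have := ha.1; rw [Finset.mem_filter] at this; exact this.2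
      rw [Finset.mem_erase, SimpleGraph.mem_neighborFinset]
      refine ⟨?_, hadj.symm⟩
      intro hne
      rw [hne] at haL
      omega
    · rw [Finset.card_erase_of_mem (by rwa [SimpleGraph.mem_neighborFinset]),
        SimpleGraph.card_neighborFinset_eq_degree, hreg b]

lemma card_layer_le (hconn : G.Connected) (hU : U.Nonempty) {d : ℕ}
    (hreg : G.IsRegularOfDegree d) (k : ℕ) :
    ({x ∈ (univ : Finset V) | setDist G U x = k + 1}).card ≤ d * (d - 1) ^ k * U.card := by
  induction k with
  | zero =>
    simpa using le_trans (card_layer_one_le G U hconn hU hreg)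
      (Nat.mul_le_mul_left d (card_layer_zero_le G U hconn hU))
  | succ k ih =>
    calc ({x ∈ (univ : Finset V) | setDist G U x = k + 2}).card
        ≤ (d - 1) * ({x ∈ (univ : Finset V) | setDist G U x = k + 1}).card :=
          card_layer_succ_le G U hconn hU hreg k
      _ ≤ (d - 1) * (d * (d - 1) ^ k * U.card) := Nat.mul_le_mul_left _ ih
      _ = d * (d - 1) ^ (k + 1) * U.card := by ring

end Count

lemma geom_le_aux {r : ℝ} (h0 : 0 ≤ r) (h1 : r < 1) (n : ℕ) :
    ∑ j ∈ Finset.range n, r ^ j ≤ (1 - r)⁻¹ := by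
  have h2 : (0:ℝ) < 1 - r := by linarith
  rw [geom_sum_eq (ne_of_lt h1) n]
  have heq : (r ^ n - 1) / (r - 1) = (1 - r ^ n) / (1 - r) := by
    rw [← neg_div_neg_eq]; ring_nf
  rw [heq, ← one_div]
  gcongr
  · nlinarith [pow_nonneg h0 n]

section SumBound
variable {V : Type*} [Fintype V] [DecidableEq V] (G : SimpleGraph V) [DecidableRel G.Adj]
  (U : Finset V)

lemma sum_inv_pow_le (hconn : G.Connected) (hU : U.Nonempty) {d : ℕ} (hd : 3 ≤ d)
    (hreg : G.IsRegularOfDegree d) :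
    ∑ x : V, ((d:ℝ)⁻¹) ^ (setDist G U x) ≤ 2 * d * U.card := by
  classical
  have : Nonempty V := ⟨hU.choose⟩
  have hD3 : (3:ℝ) ≤ (d:ℝ) := by exact_mod_cast hd
  have hD0 : (0:ℝ) < (d:ℝ) := by linarith
  set I : Finset ℕ := univ.image (fun x => setDist G U x) with hI
  have hIne : I.Nonempty := Finset.image_nonempty.mpr univ_nonempty
  set N : ℕ := I.max' hIne + 1 with hN
  have h1 : ∑ x : V, ((d:ℝ)⁻¹) ^ (setDist G U x) =
      ∑ j ∈ I, ∑ _x ∈ ({x ∈ (univ : Finset V) | setDist G U x = j}), ((d:ℝ)⁻¹) ^ j :=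
    (Finset.sum_fiberwise_of_maps_to'
      (fun x _ => Finset.mem_image_of_mem (fun x => setDist G U x) (mem_univ x))
      (fun j => ((d:ℝ)⁻¹) ^ j)).symm
  have h3 : ∑ x : V, ((d:ℝ)⁻¹) ^ (setDist G U x) ≤
      ∑ j ∈ Finset.range N,
        (({x ∈ (univ : Finset V) | setDist G U x = j}).card : ℝ) * ((d:ℝ)⁻¹) ^ j := by
    rw [h1]
    simp_rw [Finset.sum_const, nsmul_eq_mul]
    apply Finset.sum_le_sum_of_subset_of_nonneg
    · intro j hj
      rw [Finset.mem_range, hN]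
      exact Nat.lt_succ_of_le (Finset.le_max' I j hj)
    · intro j _ _
      positivity
  have hm1 : (1:ℝ) ≤ (U.card : ℝ) := by exact_mod_cast hU.card_pos
  have hr0 : (0:ℝ) ≤ ((d:ℝ) - 1) / (d:ℝ) := div_nonneg (by linarith) hD0.le
  have hr1 : ((d:ℝ) - 1) / (d:ℝ) < 1 := by rw [div_lt_one hD0]; linarith
  have h4 : ∑ j ∈ Finset.range N,
        (({x ∈ (univ : Finset V) | setDist G U x = j}).card : ℝ) * ((d:ℝ)⁻¹) ^ j ≤
      (U.card : ℝ) + ∑ j ∈ Finset.range (I.max' hIne),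
        (U.card : ℝ) * (((d:ℝ) - 1) / (d:ℝ)) ^ j := by
    rw [hN, Finset.sum_range_succ', add_comm]
    apply add_le_add
    · have hz : ({x ∈ (univ : Finset V) | setDist G U x = 0}).card ≤ U.card :=
        card_layer_zero_le G U hconn hU
      simpa using (Nat.cast_le.mpr hz : (({x ∈ (univ : Finset V) | setDist G U x = 0}).card : ℝ) ≤ (U.card : ℝ))
    · apply Finset.sum_le_sum
      intro j _
      have hc : (({x ∈ (univ : Finset V) | setDist G U x = j + 1}).card : ℝ) ≤
          (d:ℝ) * ((d:ℝ) - 1) ^ j * (U.card : ℝ) := by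
        have h : (({x ∈ (univ : Finset V) | setDist G U x = j + 1}).card : ℝ) ≤
            ((d * (d - 1) ^ j * U.card : ℕ) : ℝ) :=
          Nat.cast_le.mpr (card_layer_le G U hconn hU hreg j)
        refine h.trans (le_of_eq ?_)
        push_cast [Nat.cast_sub (by omega : 1 ≤ d)]
        ring
      calc (({x ∈ (univ : Finset V) | setDist G U x = j + 1}).card : ℝ) * ((d:ℝ)⁻¹) ^ (j + 1)
          ≤ ((d:ℝ) * ((d:ℝ) - 1) ^ j * (U.card : ℝ)) * ((d:ℝ)⁻¹) ^ (j + 1) :=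
            mul_le_mul_of_nonneg_right hc (by positivity)
        _ = (U.card : ℝ) * (((d:ℝ) - 1) / (d:ℝ)) ^ j := by
            have hd' : (d:ℝ) * (d:ℝ)⁻¹ = 1 := mul_inv_cancel₀ hD0.ne'
            rw [div_pow, pow_succ, div_eq_mul_inv, ← inv_pow]
            linear_combination (((d:ℝ) - 1) ^ j * (U.card : ℝ) * ((d:ℝ)⁻¹) ^ j) * hd'
  have h5 : ∑ j ∈ Finset.range (I.max' hIne),
      (U.card : ℝ) * (((d:ℝ) - 1) / (d:ℝ)) ^ j ≤ (U.card : ℝ) * (d:ℝ) := by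
    rw [← Finset.mul_sum]
    have hgeo := geom_le_aux hr0 hr1 (I.max' hIne)
    have hinv : (1 - ((d:ℝ) - 1) / (d:ℝ))⁻¹ = (d:ℝ) := by
      field_simp
      ring
    calc (U.card : ℝ) * ∑ j ∈ Finset.range (I.max' hIne), (((d:ℝ) - 1) / (d:ℝ)) ^ j
        ≤ (U.card : ℝ) * (1 - ((d:ℝ) - 1) / (d:ℝ))⁻¹ :=
          mul_le_mul_of_nonneg_left hgeo (by linarith)
      _ = (U.card : ℝ) * (d:ℝ) := by rw [hinv]
  calc ∑ x : V, ((d:ℝ)⁻¹) ^ (setDist G U x)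
      ≤ (U.card : ℝ) + (U.card : ℝ) * (d:ℝ) := le_trans h3 (le_trans h4 (by linarith))
    _ ≤ 2 * (d:ℝ) * (U.card : ℝ) := by nlinarith

end SumBound

lemma holder_aux {ι : Type*} (s : Finset ι) (b : ι → ℝ) (hb : ∀ i, 0 ≤ b i) {α : ℝ}
    (hα0 : 0 ≤ α) (hα1 : α ≤ 1) :
    ∑ i ∈ s, (b i) ^ α ≤ (s.card : ℝ) ^ (1 - α) * (∑ i ∈ s, b i) ^ α := by
  rcases eq_or_lt_of_le hα0 with h0 | h0
  · simp [← h0, Real.rpow_zero, Real.rpow_one]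
  · have hp : 1 ≤ α⁻¹ := (one_le_inv₀ h0).2 hα1
    have key := Real.inner_le_weight_mul_Lp_of_nonneg s hp (fun _ => (1:ℝ))
      (fun i => b i ^ α) (fun _ => zero_le_one) (fun i => Real.rpow_nonneg (hb i) α)
    have hbb : ∀ i, ((b i ^ α) ^ (α⁻¹ : ℝ)) = b i := by
      intro i
      rw [← Real.rpow_mul (hb i), mul_inv_cancel₀ (ne_of_gt h0), Real.rpow_one]
    simp only [one_mul, inv_inv, Finset.sum_const, nsmul_eq_mul, mul_one, hbb] at key
    exact key

lemma pow_rpow_identity {β : ℝ} (hβ : 0 < β) {D : ℝ} (hD : 1 < D) (k : ℕ) :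
    ((D⁻¹) ^ k : ℝ) ^ (-(Real.log β / Real.log D)) = β ^ k := by
  have hD0 : (0:ℝ) < D := lt_trans one_pos hD
  have hlogD : Real.log D ≠ 0 := ne_of_gt (Real.log_pos hD)
  have h1 : ((D⁻¹) ^ k : ℝ) = D ^ (-(k:ℝ)) := by
    rw [inv_pow, ← Real.rpow_natCast D k, ← Real.rpow_neg hD0.le]
  rw [h1, ← Real.rpow_mul hD0.le, Real.rpow_def_of_pos hD0]
  have h2 : Real.log D * (-(k:ℝ) * -(Real.log β / Real.log D)) = (k:ℝ) * Real.log β := by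
    field_simp
  rw [h2, Real.exp_nat_mul, Real.exp_log hβ]

theorem stmt_10 {V : Type*} [Fintype V] [DecidableEq V] (G : SimpleGraph V)
    [DecidableRel G.Adj] (hconn : G.Connected) (d : ℕ) (hd : 3 ≤ d)
    (hreg : G.IsRegularOfDegree d)
    (U : Finset V) (hU : U.Nonempty) (θ : ℝ) (hθ0 : 0 ≤ θ) (hθ1 : θ ≤ 1 / 3)
    (w : V → V → ℝ)
    (hw : ∀ x y, w x y = (1 - θ) ^ max (setDist G U x) (setDist G U y))
    (u : V) (hu : u ∈ U) :
    1 / (2 * d * U.card) *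
        ((U.card : ℝ) / (Fintype.card V : ℝ)) ^
          (1 + Real.log (1 - θ) / Real.log d) ≤
      (∑ z ∈ G.neighborFinset u, w u z) /
        (∑ x : V, ∑ z ∈ G.neighborFinset x, w x z) := by
  classical
  have hβ0 : (0:ℝ) < 1 - θ := by linarith
  have hβ23 : (2:ℝ)/3 ≤ 1 - θ := by linarith
  have hβ1 : (1:ℝ) - θ ≤ 1 := by linarith
  have hD3 : (3:ℝ) ≤ (d:ℝ) := by exact_mod_cast hd
  have hD0 : (0:ℝ) < (d:ℝ) := by linarith
  have hD1 : (1:ℝ) < (d:ℝ) := by linarith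
  have hlogD : 0 < Real.log (d:ℝ) := Real.log_pos hD1
  set α : ℝ := -(Real.log (1 - θ) / Real.log (d:ℝ)) with hα
  have hexp : 1 + Real.log (1 - θ) / Real.log (d:ℝ) = 1 - α := by rw [hα]; ring
  have hα0 : 0 ≤ α := by
    rw [hα, neg_nonneg]
    exact div_nonpos_of_nonpos_of_nonneg (Real.log_nonpos (by linarith) hβ1) hlogD.le
  have hα1 : α ≤ 1 := by
    have hβinv : (1 - θ)⁻¹ ≤ (d:ℝ) := by
      have h1 : (1 - θ)⁻¹ ≤ ((2:ℝ)/3)⁻¹ := by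
        apply inv_anti₀ (by norm_num) hβ23
      have h2 : ((2:ℝ)/3)⁻¹ = 3/2 := by norm_num
      linarith [h1.trans_eq h2]
    have h : -Real.log (1 - θ) ≤ Real.log (d:ℝ) := by
      rw [← Real.log_inv]
      exact Real.log_le_log (by positivity) hβinv
    rw [hα, ← neg_div, div_le_one hlogD]
    exact h
  -- basic posivity of cardinalities
  have hne : Nonempty V := ⟨u⟩
  have hm0 : (0:ℝ) < (U.card : ℝ) := by exact_mod_cast hU.card_pos
  have hn0 : (0:ℝ) < (Fintype.card V : ℝ) := by exact_mod_cast Fintype.card_pos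
  -- numerator bound
  have hu0 : setDist G U u = 0 := setDist_self G U hu
  have hterm : ∀ x z : V, 0 < w x z := by
    intro x z; rw [hw]; positivity
  have hnfne : ∀ x : V, (G.neighborFinset x).Nonempty := by
    intro x
    apply Finset.card_pos.mp
    rw [SimpleGraph.card_neighborFinset_eq_degree, hreg x]
    omega
  have hnum : (d:ℝ) * (1 - θ) ≤ ∑ z ∈ G.neighborFinset u, w u z := by
    have hle : ∀ z ∈ G.neighborFinset u, (1 - θ) ≤ w u z := by
      intro z hz
      rw [hw, hu0]
      have hadj : G.Adj z u := ((SimpleGraph.mem_neighborFinset G u z).mp hz).symm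
      have h1 : setDist G U z ≤ 1 :=
        le_trans (setDist_le G U hu) (SimpleGraph.dist_le hadj.toWalk)
      calc (1 - θ) = (1 - θ) ^ 1 := (pow_one _).symm
        _ ≤ (1 - θ) ^ (max 0 (setDist G U z)) :=
            pow_le_pow_of_le_one hβ0.le hβ1 (by omega)
    calc (d:ℝ) * (1 - θ) = (G.neighborFinset u).card • (1 - θ) := by
          rw [SimpleGraph.card_neighborFinset_eq_degree, hreg u, nsmul_eq_mul]
      _ ≤ ∑ z ∈ G.neighborFinset u, w u z := Finset.card_nsmul_le_sum _ _ _ hle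
  -- denominator positivity
  have hW0 : 0 < ∑ x : V, ∑ z ∈ G.neighborFinset x, w x z := by
    apply Finset.sum_pos (fun x _ => Finset.sum_pos (fun z _ => hterm x z) (hnfne x))
      univ_nonempty
  -- denominator bound via S
  have hWS : (∑ x : V, ∑ z ∈ G.neighborFinset x, w x z) ≤
      (d:ℝ) * ∑ x : V, (1 - θ) ^ (setDist G U x) := by
    rw [Finset.mul_sum]
    apply Finset.sum_le_sum
    intro x _
    calc ∑ z ∈ G.neighborFinset x, w x z
        ≤ ∑ _z ∈ G.neighborFinset x, (1 - θ) ^ (setDist G U x) := by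
          apply Finset.sum_le_sum
          intro z _
          rw [hw]
          exact pow_le_pow_of_le_one hβ0.le hβ1 (le_max_left _ _)
      _ = (d:ℝ) * (1 - θ) ^ (setDist G U x) := by
          rw [Finset.sum_const, SimpleGraph.card_neighborFinset_eq_degree, hreg x,
            nsmul_eq_mul]
  -- Hölder
  have hid : ∀ x : V, (((d:ℝ)⁻¹) ^ (setDist G U x) : ℝ) ^ α = (1 - θ) ^ (setDist G U x) :=
    fun x => pow_rpow_identity hβ0 hD1 _
  have hS : ∑ x : V, (1 - θ) ^ (setDist G U x) ≤
      ((Fintype.card V : ℝ)) ^ (1 - α) * (∑ x : V, ((d:ℝ)⁻¹) ^ (setDist G U x)) ^ α := by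
    have := holder_aux (univ : Finset V) (fun x => ((d:ℝ)⁻¹) ^ (setDist G U x))
      (fun x => by positivity) hα0 hα1
    simp only [hid, Finset.card_univ] at this
    exact this
  have hT : (∑ x : V, ((d:ℝ)⁻¹) ^ (setDist G U x)) ≤ 2 * (d:ℝ) * (U.card : ℝ) :=
    sum_inv_pow_le G U hconn hU hd hreg
  have hT0 : 0 < ∑ x : V, ((d:ℝ)⁻¹) ^ (setDist G U x) :=
    Finset.sum_pos (fun x _ => by positivity) univ_nonempty
  -- main chain
  rw [hexp]
  have hXpos : 0 < ((Fintype.card V : ℝ)) ^ (1 - α) *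
      (∑ x : V, ((d:ℝ)⁻¹) ^ (setDist G U x)) ^ α := by positivity
  have hWX : (∑ x : V, ∑ z ∈ G.neighborFinset x, w x z) ≤
      (d:ℝ) * (((Fintype.card V : ℝ)) ^ (1 - α) *
        (∑ x : V, ((d:ℝ)⁻¹) ^ (setDist G U x)) ^ α) :=
    le_trans hWS (mul_le_mul_of_nonneg_left hS hD0.le)
  have hkey : 1 / (2 * (d:ℝ) * (U.card : ℝ)) * ((U.card : ℝ) / (Fintype.card V : ℝ)) ^ (1 - α) ≤
      ((d:ℝ) * (1 - θ)) / ((d:ℝ) * (((Fintype.card V : ℝ)) ^ (1 - α) *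
        (∑ x : V, ((d:ℝ)⁻¹) ^ (setDist G U x)) ^ α)) := by
    rw [mul_div_mul_left _ _ (ne_of_gt hD0), le_div_iff₀ hXpos]
    have hTα : (∑ x : V, ((d:ℝ)⁻¹) ^ (setDist G U x)) ^ α ≤
        2 * (1 - θ)⁻¹ * (U.card : ℝ) ^ α := by
      calc (∑ x : V, ((d:ℝ)⁻¹) ^ (setDist G U x)) ^ α
          ≤ (2 * (d:ℝ) * (U.card : ℝ)) ^ α := Real.rpow_le_rpow hT0.le hT hα0
        _ = (2:ℝ) ^ α * (d:ℝ) ^ α * (U.card : ℝ) ^ α := by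
            rw [Real.mul_rpow (by positivity) hm0.le, Real.mul_rpow (by norm_num) hD0.le]
        _ ≤ 2 * (1 - θ)⁻¹ * (U.card : ℝ) ^ α := by
            have h2 : (2:ℝ) ^ α ≤ 2 := by
              calc (2:ℝ) ^ α ≤ (2:ℝ) ^ (1:ℝ) :=
                    Real.rpow_le_rpow_of_exponent_le one_le_two hα1
                _ = 2 := Real.rpow_one 2
            have hda : (d:ℝ) ^ α = (1 - θ)⁻¹ := by
              rw [Real.rpow_def_of_pos hD0, hα, mul_neg, mul_comm,
                div_mul_cancel₀ _ (ne_of_gt hlogD), Real.exp_neg, Real.exp_log hβ0]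
            rw [hda]
            apply mul_le_mul_of_nonneg_right _ (by positivity)
            exact mul_le_mul_of_nonneg_right h2 (by positivity)
    calc 1 / (2 * (d:ℝ) * (U.card : ℝ)) * ((U.card : ℝ) / (Fintype.card V : ℝ)) ^ (1 - α) *
          (((Fintype.card V : ℝ)) ^ (1 - α) * (∑ x : V, ((d:ℝ)⁻¹) ^ (setDist G U x)) ^ α)
        ≤ 1 / (2 * (d:ℝ) * (U.card : ℝ)) * ((U.card : ℝ) / (Fintype.card V : ℝ)) ^ (1 - α) *
          (((Fintype.card V : ℝ)) ^ (1 - α) * (2 * (1 - θ)⁻¹ * (U.card : ℝ) ^ α)) := by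
          refine mul_le_mul_of_nonneg_left ?_ (by positivity)
          exact mul_le_mul_of_nonneg_left hTα (by positivity)
      _ = 1 / (2 * (d:ℝ) * (U.card : ℝ)) *
            (((U.card : ℝ) / (Fintype.card V : ℝ)) ^ (1 - α) * ((Fintype.card V : ℝ)) ^ (1 - α)) *
            (2 * (1 - θ)⁻¹ * (U.card : ℝ) ^ α) := by ring
      _ = 1 / (2 * (d:ℝ) * (U.card : ℝ)) * ((U.card : ℝ)) ^ (1 - α) *
            (2 * (1 - θ)⁻¹ * (U.card : ℝ) ^ α) := by
          rw [← Real.mul_rpow (by positivity) hn0.le, div_mul_cancel₀ _ (ne_of_gt hn0)]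
      _ = ((U.card : ℝ) ^ (1 - α) * (U.card : ℝ) ^ α) * (1 - θ)⁻¹ / ((d:ℝ) * (U.card : ℝ)) := by
          ring
      _ = (1 - θ)⁻¹ / (d:ℝ) := by
          rw [← Real.rpow_add hm0]
          norm_num
          field_simp
      _ ≤ 1 - θ := by
          rw [inv_eq_one_div, div_div, div_le_iff₀ (by positivity)]
          have h49 : (2:ℝ)/3 * (2/3) ≤ (1 - θ) * (1 - θ) :=
            mul_le_mul hβ23 hβ23 (by linarith) (by linarith)
          have h9 : (3:ℝ) * 3 ≤ (d:ℝ) * (d:ℝ) :=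
            mul_le_mul hD3 hD3 (by linarith) (by linarith)
          nlinarith [h49, h9]
  calc 1 / (2 * (d:ℝ) * (U.card : ℝ)) * ((U.card : ℝ) / (Fintype.card V : ℝ)) ^ (1 - α)
      ≤ ((d:ℝ) * (1 - θ)) / ((d:ℝ) * (((Fintype.card V : ℝ)) ^ (1 - α) *
        (∑ x : V, ((d:ℝ)⁻¹) ^ (setDist G U x)) ^ α)) := hkey
    _ ≤ (∑ z ∈ G.neighborFinset u, w u z) /
        (∑ x : V, ∑ z ∈ G.neighborFinset x, w x z) :=
      div_le_div₀ (le_trans (by positivity) hnum) hnum hW0 hWX
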